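/- arXiv:1311.4012 — 5 statements merged into one kernel-verified Lean document; each statement's English description precedes it below -/
import Mathlib

section
/- Let f, g : (a,b) → ℝ≥0 be C² functions with b > a such that: the limits as x → b⁻ of f, g, and their unit tangent vectors exist; f' ≥ 0 and g' ≥ 0 on (a,b); lim_{x→b⁻} f(x) ≤ lim_{x→b⁻} g(x); the limiting tangent angle of f at b is at least that of g; and the upward curvature κ_f(x) = f''(x)/(1+f'(x)²)^{3/2} satisfies κ_f(x) ≤ κ_g(x) for all x ∈ (a,b). Then f(x) ≤ g(x) and θ(t_f(x)) ≥ θ(t_g(x)) for all x ∈ (a,b), where θ(t_h(x)) = arctan(h'(x)) is the angle of the unit tangent vector. -/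
open Set Filter Topology

/-- Curvature Comparison Theorem (Proposition: first part). -/
theorem curvature_comparison
    (a b : ℝ) (hab : a < b)
    (f g f' g' f'' g'' : ℝ → ℝ)
    (hfd : ∀ x ∈ Ioo a b, HasDerivAt f (f' x) x)
    (hfd' : ∀ x ∈ Ioo a b, HasDerivAt f' (f'' x) x)
    (hgd : ∀ x ∈ Ioo a b, HasDerivAt g (g' x) x)
    (hgd' : ∀ x ∈ Ioo a b, HasDerivAt g' (g'' x) x)
    (hf0 : ∀ x ∈ Ioo a b, 0 ≤ f x)
    (hg0 : ∀ x ∈ Ioo a b, 0 ≤ g x)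
    (hf'0 : ∀ x ∈ Ioo a b, 0 ≤ f' x)
    (hg'0 : ∀ x ∈ Ioo a b, 0 ≤ g' x)
    (Lf Lg Tf Tg : ℝ)
    (hLf : Tendsto f (𝓝[<] b) (𝓝 Lf))
    (hLg : Tendsto g (𝓝[<] b) (𝓝 Lg))
    (hTf : Tendsto (fun x => Real.arctan (f' x)) (𝓝[<] b) (𝓝 Tf))
    (hTg : Tendsto (fun x => Real.arctan (g' x)) (𝓝[<] b) (𝓝 Tg))
    (hL : Lf ≤ Lg)
    (hT : Tg ≤ Tf)
    (hκ : ∀ x ∈ Ioo a b,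
      f'' x / (1 + (f' x) ^ 2) ^ ((3 : ℝ) / 2) ≤ g'' x / (1 + (g' x) ^ 2) ^ ((3 : ℝ) / 2)) :
    ∀ x ∈ Ioo a b, f x ≤ g x ∧ Real.arctan (g' x) ≤ Real.arctan (f' x) := by
  -- derivative of sin ∘ arctan ∘ h' equals the curvature
  have key : ∀ (h' h'' : ℝ → ℝ), (∀ x ∈ Ioo a b, HasDerivAt h' (h'' x) x) →
      ∀ x ∈ Ioo a b, HasDerivAt (fun y => Real.sin (Real.arctan (h' y)))
        (h'' x / (1 + (h' x) ^ 2) ^ ((3 : ℝ) / 2)) x := by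
    intro h' h'' hd x hx
    have h1 : HasDerivAt Real.arctan (1 / (1 + (h' x) ^ 2)) (h' x) :=
      Real.hasDerivAt_arctan _
    have h2 : HasDerivAt Real.sin (Real.cos (Real.arctan (h' x))) (Real.arctan (h' x)) :=
      Real.hasDerivAt_sin _
    have h3 := h2.comp x (h1.comp x (hd x hx))
    refine h3.congr_deriv ?_
    symm
    rw [Real.cos_arctan]
    have hpos : (0 : ℝ) < 1 + (h' x) ^ 2 := by positivity
    rw [show ((3 : ℝ) / 2) = 1 + 1 / 2 by norm_num, Real.rpow_add hpos, Real.rpow_one,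
      ← Real.sqrt_eq_rpow]
    have hs : Real.sqrt (1 + (h' x) ^ 2) ≠ 0 := by positivity
    field_simp
  set F : ℝ → ℝ := fun y => Real.sin (Real.arctan (f' y)) with hFdef
  set G : ℝ → ℝ := fun y => Real.sin (Real.arctan (g' y)) with hGdef
  have hDder : ∀ x ∈ Ioo a b, HasDerivAt (fun y => F y - G y)
      (f'' x / (1 + (f' x) ^ 2) ^ ((3 : ℝ) / 2) - g'' x / (1 + (g' x) ^ 2) ^ ((3 : ℝ) / 2)) x :=
    fun x hx => (key f' f'' hfd' x hx).sub (key g' g'' hgd' x hx)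
  have hanti : AntitoneOn (fun y => F y - G y) (Ioo a b) := by
    apply antitoneOn_of_deriv_nonpos (convex_Ioo a b)
    · exact fun x hx => (hDder x hx).continuousAt.continuousWithinAt
    · rw [interior_Ioo]
      exact fun x hx => ((hDder x hx).differentiableAt.differentiableWithinAt)
    · intro x hx
      rw [interior_Ioo] at hx
      rw [(hDder x hx).deriv]
      exact sub_nonpos.2 (hκ x hx)
  have hFlim : Tendsto F (𝓝[<] b) (𝓝 (Real.sin Tf)) :=
    (Real.continuous_sin.tendsto Tf).comp hTf
  have hGlim : Tendsto G (𝓝[<] b) (𝓝 (Real.sin Tg)) :=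
    (Real.continuous_sin.tendsto Tg).comp hTg
  have hne : (𝓝[<] b).NeBot := nhdsLT_neBot b
  -- Tf, Tg lie in [-(π/2), π/2]
  have hmem : ∀ (h' : ℝ → ℝ) (T : ℝ),
      Tendsto (fun x => Real.arctan (h' x)) (𝓝[<] b) (𝓝 T) →
      T ∈ Icc (-(Real.pi / 2)) (Real.pi / 2) := by
    intro h' T hTt
    constructor
    · exact ge_of_tendsto hTt (Eventually.of_forall fun y =>
        (Real.neg_pi_div_two_lt_arctan (h' y)).le)
    · exact le_of_tendsto hTt (Eventually.of_forall fun y =>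
        (Real.arctan_lt_pi_div_two (h' y)).le)
  have hsinT : Real.sin Tg ≤ Real.sin Tf :=
    Real.strictMonoOn_sin.monotoneOn (hmem g' Tg hTg) (hmem f' Tf hTf) hT
  -- angle inequality everywhere
  have hangle : ∀ x ∈ Ioo a b, Real.arctan (g' x) ≤ Real.arctan (f' x) := by
    intro x hx
    have hev : ∀ᶠ y in 𝓝[<] b, F y - G y ≤ F x - G x := by
      filter_upwards [Ioo_mem_nhdsLT_of_mem (⟨hx.2, le_refl b⟩ : b ∈ Ioc x b)] with y hy
      exact hanti hx ⟨hx.1.trans hy.1, hy.2⟩ hy.1.le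
    have hlim : Real.sin Tf - Real.sin Tg ≤ F x - G x :=
      le_of_tendsto (hFlim.sub hGlim) hev
    have hGF : G x ≤ F x := by linarith
    have hma : Real.arctan (f' x) ∈ Icc (-(Real.pi / 2)) (Real.pi / 2) :=
      ⟨(Real.neg_pi_div_two_lt_arctan _).le, (Real.arctan_lt_pi_div_two _).le⟩
    have hmb : Real.arctan (g' x) ∈ Icc (-(Real.pi / 2)) (Real.pi / 2) :=
      ⟨(Real.neg_pi_div_two_lt_arctan _).le, (Real.arctan_lt_pi_div_two _).le⟩
    exact (Real.strictMonoOn_sin.le_iff_le hmb hma).mp hGF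
  intro x hx
  refine ⟨?_, hangle x hx⟩
  -- f - g is monotone
  have hd' : ∀ y ∈ Ioo a b, g' y ≤ f' y :=
    fun y hy => Real.arctan_strictMono.le_iff_le.mp (hangle y hy)
  have hfgder : ∀ y ∈ Ioo a b, HasDerivAt (fun z => f z - g z) (f' y - g' y) y :=
    fun y hy => (hfd y hy).sub (hgd y hy)
  have hmono : MonotoneOn (fun z => f z - g z) (Ioo a b) := by
    apply monotoneOn_of_deriv_nonneg (convex_Ioo a b)
    · exact fun y hy => (hfgder y hy).continuousAt.continuousWithinAt
    · rw [interior_Ioo]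
      exact fun y hy => (hfgder y hy).differentiableAt.differentiableWithinAt
    · intro y hy
      rw [interior_Ioo] at hy
      rw [(hfgder y hy).deriv]
      exact sub_nonneg.2 (hd' y hy)
  have hev : ∀ᶠ y in 𝓝[<] b, f x - g x ≤ f y - g y := by
    filter_upwards [Ioo_mem_nhdsLT_of_mem (⟨hx.2, le_refl b⟩ : b ∈ Ioc x b)] with y hy
    exact hmono hx ⟨hx.1.trans hy.1, hy.2⟩ hy.1.le
  have : f x - g x ≤ Lf - Lg := ge_of_tendsto (hLf.sub hLg) hev
  linarith
end

section
/- Under the hypotheses of the Curvature Comparison Theorem (f, g : (a,b) → ℝ≥0 C², nonnegative derivatives, limits at b⁻ exist, lim f ≤ lim g at b, limiting tangent angle of f at least that of g, and κ_f ≤ κ_g on (a,b)), if additionally there exists y ∈ (a,b) with κ_f(y) < κ_g(y), then there exists φ > 0 such that θ(t_f(x)) − θ(t_g(x)) ≥ φ for all x ∈ (a,y). -/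
open Set Filter Topology

private lemma sin_arctan_hasDerivAt (F : ℝ → ℝ) (c x : ℝ) (h : HasDerivAt F c x) :
    HasDerivAt (fun t => Real.sin (Real.arctan (F t)))
      (c / (1 + (F x) ^ 2) ^ ((3 : ℝ) / 2)) x := by
  have h1 : HasDerivAt (fun t => Real.arctan (F t)) (1 / (1 + (F x) ^ 2) * c) x :=
    (Real.hasDerivAt_arctan (F x)).comp x h
  have h2 : HasDerivAt (fun t => Real.sin (Real.arctan (F t)))
      (Real.cos (Real.arctan (F x)) * (1 / (1 + (F x) ^ 2) * c)) x :=
    (Real.hasDerivAt_sin _).comp x h1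
  convert h2 using 1
  have hpos : (0 : ℝ) < 1 + (F x) ^ 2 := by positivity
  have hs : (0 : ℝ) < Real.sqrt (1 + (F x) ^ 2) := Real.sqrt_pos.2 hpos
  have hsq : Real.sqrt (1 + (F x) ^ 2) ^ 2 = 1 + (F x) ^ 2 := Real.sq_sqrt hpos.le
  rw [Real.cos_arctan,
    show ((3 : ℝ) / 2) = 1 / 2 + 1 by norm_num, Real.rpow_add hpos, Real.rpow_one,
    ← Real.sqrt_eq_rpow]
  field_simp

private lemma sin_sub_sin_le {u v : ℝ} (huv : v ≤ u) (hu : u ≤ Real.pi / 2)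
    (hv : -(Real.pi / 2) ≤ v) : Real.sin u - Real.sin v ≤ u - v := by
  rw [Real.sin_sub_sin]
  have ht0 : 0 ≤ (u - v) / 2 := by linarith
  have ht1 : (u - v) / 2 ≤ Real.pi := by nlinarith [Real.pi_pos]
  have hsn : 0 ≤ Real.sin ((u - v) / 2) := Real.sin_nonneg_of_nonneg_of_le_pi ht0 ht1
  have hsl : Real.sin ((u - v) / 2) ≤ (u - v) / 2 := Real.sin_le ht0
  have hc : Real.cos ((u + v) / 2) ≤ 1 := Real.cos_le_one _
  nlinarith

/-- Curvature Comparison Theorem (Proposition: first part). -/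
theorem curvature_comparison_strict
    (a b : ℝ) (hab : a < b)
    (f g f' g' f'' g'' : ℝ → ℝ)
    (hfd : ∀ x ∈ Ioo a b, HasDerivAt f (f' x) x)
    (hfd' : ∀ x ∈ Ioo a b, HasDerivAt f' (f'' x) x)
    (hgd : ∀ x ∈ Ioo a b, HasDerivAt g (g' x) x)
    (hgd' : ∀ x ∈ Ioo a b, HasDerivAt g' (g'' x) x)
    (hf0 : ∀ x ∈ Ioo a b, 0 ≤ f x)
    (hg0 : ∀ x ∈ Ioo a b, 0 ≤ g x)
    (hf'0 : ∀ x ∈ Ioo a b, 0 ≤ f' x)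
    (hg'0 : ∀ x ∈ Ioo a b, 0 ≤ g' x)
    (Lf Lg Tf Tg : ℝ)
    (hLf : Tendsto f (𝓝[<] b) (𝓝 Lf))
    (hLg : Tendsto g (𝓝[<] b) (𝓝 Lg))
    (hTf : Tendsto (fun x => Real.arctan (f' x)) (𝓝[<] b) (𝓝 Tf))
    (hTg : Tendsto (fun x => Real.arctan (g' x)) (𝓝[<] b) (𝓝 Tg))
    (hL : Lf ≤ Lg)
    (hT : Tg ≤ Tf)
    (hκ : ∀ x ∈ Ioo a b,
      f'' x / (1 + (f' x) ^ 2) ^ ((3 : ℝ) / 2) ≤ g'' x / (1 + (g' x) ^ 2) ^ ((3 : ℝ) / 2)) :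
    ∀ y ∈ Ioo a b,
      f'' y / (1 + (f' y) ^ 2) ^ ((3 : ℝ) / 2) < g'' y / (1 + (g' y) ^ 2) ^ ((3 : ℝ) / 2) →
      ∃ φ > 0, ∀ x ∈ Ioo a y,
        φ ≤ Real.arctan (f' x) - Real.arctan (g' x) := by
  intro y hy hκy
  set S : ℝ → ℝ := fun x =>
    Real.sin (Real.arctan (f' x)) - Real.sin (Real.arctan (g' x)) with hS
  -- derivative of S on Ioo a b
  have hSd : ∀ x ∈ Ioo a b, HasDerivAt S
      (f'' x / (1 + (f' x) ^ 2) ^ ((3 : ℝ) / 2)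
        - g'' x / (1 + (g' x) ^ 2) ^ ((3 : ℝ) / 2)) x := by
    intro x hx
    exact (sin_arctan_hasDerivAt f' (f'' x) x (hfd' x hx)).sub
      (sin_arctan_hasDerivAt g' (g'' x) x (hgd' x hx))
  -- S is antitone on Ioo a b
  have hanti : AntitoneOn S (Ioo a b) := by
    have hint : interior (Ioo a b) = Ioo a b := interior_Ioo
    apply antitoneOn_of_deriv_nonpos (convex_Ioo a b)
    · intro x hx
      exact (hSd x hx).continuousAt.continuousWithinAt
    · intro x hx
      rw [hint] at hx
      exact (hSd x hx).differentiableAt.differentiableWithinAt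
    · intro x hx
      rw [hint] at hx
      rw [(hSd x hx).deriv]
      linarith [hκ x hx]
  -- the limit of S at b⁻
  have hSlim : Tendsto S (𝓝[<] b) (𝓝 (Real.sin Tf - Real.sin Tg)) :=
    ((Real.continuous_sin.continuousAt.tendsto.comp hTf).sub
      (Real.continuous_sin.continuousAt.tendsto.comp hTg))
  -- Tf, Tg lie in [-π/2, π/2]
  have hmem : ∀ (F' : ℝ → ℝ) (T : ℝ),
      Tendsto (fun x => Real.arctan (F' x)) (𝓝[<] b) (𝓝 T) →
      T ∈ Icc (-(Real.pi / 2)) (Real.pi / 2) := by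
    intro F' T hTend
    have hne : (𝓝[<] b).NeBot := nhdsLT_neBot b
    constructor
    · exact le_of_tendsto_of_tendsto tendsto_const_nhds hTend
        (Eventually.of_forall fun x => (Real.arctan_mem_Ioo (F' x)).1.le)
    · exact le_of_tendsto hTend
        (Eventually.of_forall fun x => (Real.arctan_mem_Ioo (F' x)).2.le)
  have hTfm := hmem f' Tf hTf
  have hTgm := hmem g' Tg hTg
  have hlim0 : 0 ≤ Real.sin Tf - Real.sin Tg := by
    have := Real.strictMonoOn_sin.monotoneOn hTgm hTfm hT
    linarith
  -- every value of S on Ioo a b is ≥ the limit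
  have hge : ∀ w ∈ Ioo a b, Real.sin Tf - Real.sin Tg ≤ S w := by
    intro w hw
    apply le_of_tendsto hSlim
    filter_upwards [Ioo_mem_nhdsLT_of_mem (show b ∈ Ioc w b from ⟨hw.2, le_refl b⟩)]
      with x hx
    exact hanti hw ⟨lt_trans hw.1 hx.1, hx.2⟩ hx.1.le
  -- strict decrease just after y : find z > y with S z < S y
  have hz : ∃ z, y < z ∧ z < b ∧ S z < S y := by
    have hd := hSd y hy
    have hdneg : f'' y / (1 + (f' y) ^ 2) ^ ((3 : ℝ) / 2)
        - g'' y / (1 + (g' y) ^ 2) ^ ((3 : ℝ) / 2) < 0 := by linarith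
    have hslope := hasDerivAt_iff_tendsto_slope.1 hd
    have hev : ∀ᶠ z in 𝓝[≠] y, slope S y z < 0 :=
      hslope (Filter.Tendsto.eventually_lt_const hdneg tendsto_id)
    have hev' : ∀ᶠ z in 𝓝[>] y, slope S y z < 0 :=
      hev.filter_mono (nhdsWithin_mono y fun z hz => ne_of_gt hz)
    have hev2 : ∀ᶠ z in 𝓝[>] y, z ∈ Ioo y b :=
      Ioo_mem_nhdsGT_of_mem ⟨le_refl y, hy.2⟩
    have hne : (𝓝[>] y).NeBot := nhdsGT_neBot y
    obtain ⟨z, hz1, hz2⟩ := (hev'.and hev2).exists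
    have hpos : 0 < z - y := by linarith [hz2.1]
    rw [slope_def_field, div_lt_iff₀ hpos] at hz1
    exact ⟨z, hz2.1, hz2.2, by linarith⟩
  obtain ⟨z, hyz, hzb, hSz⟩ := hz
  -- φ := S y > 0
  have hSypos : 0 < S y := by
    have h1 : Real.sin Tf - Real.sin Tg ≤ S z :=
      hge z ⟨lt_trans hy.1 hyz, hzb⟩
    linarith
  refine ⟨S y, hSypos, ?_⟩
  intro x hx
  have hxab : x ∈ Ioo a b := ⟨hx.1, lt_trans hx.2 hy.2⟩
  have hSx : S y ≤ S x := hanti hxab hy hx.2.le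
  -- from sin θf - sin θg > 0 deduce θf > θg, then use 1-Lipschitzness of sin
  set u := Real.arctan (f' x)
  set v := Real.arctan (g' x)
  have hu := Real.arctan_mem_Ioo (f' x)
  have hv := Real.arctan_mem_Ioo (g' x)
  have hsin : 0 < Real.sin u - Real.sin v := lt_of_lt_of_le hSypos hSx
  have huv : v ≤ u := by
    by_contra hlt
    push_neg at hlt
    have := Real.sin_lt_sin_of_lt_of_le_pi_div_two hu.1.le hv.2.le hlt
    linarith
  have hlip : Real.sin u - Real.sin v ≤ u - v :=
    sin_sub_sin_le huv hu.2.le hv.1.le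
  calc S y ≤ S x := hSx
    _ = Real.sin u - Real.sin v := rfl
    _ ≤ u - v := hlip
end

section
/- Let α(x) = (a + r cos(x/r), b + r sin(x/r)) with r > 0, a, b ≥ 0, let g : ℝ → ℝ be C³, convex, with g' ≥ 0, and define H₁(x) = g'(|α(x)|)·(N(x)·n(x)) where N(x) = α(x)/|α(x)| and n(x) = (cos(x/r), sin(x/r)). If x ∈ [0, πr/2] and a sin(x/r) ≥ b cos(x/r), then H₁'(x) ≤ 0. -/
open Set Real

lemma monotone_deriv_nonneg {f : ℝ → ℝ} (hf : Monotone f) {t : ℝ}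
    (hd : DifferentiableAt ℝ f t) : 0 ≤ deriv f t := by
  have h := hd.hasDerivAt
  rw [hasDerivAt_iff_tendsto_slope] at h
  refine ge_of_tendsto h ?_
  filter_upwards [self_mem_nhdsWithin] with y hy
  rcases lt_or_gt_of_ne (hy : y ≠ t) with h' | h'
  · rw [slope_def_field]
    have h1 : f y - f t ≤ 0 := by simp [hf h'.le]
    have h2 : y - t ≤ 0 := by linarith
    exact div_nonneg_iff.mpr (Or.inr ⟨h1, h2⟩)
  · rw [slope_def_field]
    exact div_nonneg (by simp [hf h'.le]) (by linarith)

set_option maxHeartbeats 1000000 in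
/-- `H₁' ≤ 0` along the circle `α(x) = (a + r cos(x/r), b + r sin(x/r))` when
    `a sin(x/r) ≥ b cos(x/r)`, for a convex nondecreasing radial log-density `g`. -/
theorem H1_deriv_nonpos
    (a b r : ℝ) (hr : 0 < r) (ha : 0 ≤ a) (hb : 0 ≤ b)
    (g : ℝ → ℝ) (hg : ContDiff ℝ 3 g) (hgconv : ConvexOn ℝ univ g)
    (hg' : ∀ t, 0 ≤ deriv g t)
    (H₁ : ℝ → ℝ)
    (hH₁ : H₁ = fun t =>
      deriv g (Real.sqrt ((a + r * Real.cos (t / r)) ^ 2 + (b + r * Real.sin (t / r)) ^ 2))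
        * (((a + r * Real.cos (t / r)) * Real.cos (t / r)
            + (b + r * Real.sin (t / r)) * Real.sin (t / r))
          / Real.sqrt ((a + r * Real.cos (t / r)) ^ 2 + (b + r * Real.sin (t / r)) ^ 2)))
    (x : ℝ) (hx : x ∈ Icc 0 (π * r / 2))
    (hα : (a + r * Real.cos (x / r), b + r * Real.sin (x / r)) ≠ ((0 : ℝ), (0 : ℝ)))
    (hab : b * Real.cos (x / r) ≤ a * Real.sin (x / r)) :
    deriv H₁ x ≤ 0 := by
  have hrne : r ≠ 0 := hr.ne'
  set c := Real.cos (x / r) with hc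
  set s := Real.sin (x / r) with hs
  -- basic trig facts
  have hθ0 : 0 ≤ x / r := div_nonneg hx.1 hr.le
  have hθ1 : x / r ≤ π / 2 := by
    rw [div_le_iff₀ hr]
    calc x ≤ π * r / 2 := hx.2
    _ = π / 2 * r := by ring
  have hcnn : 0 ≤ c := Real.cos_nonneg_of_mem_Icc ⟨by linarith [Real.pi_pos], hθ1⟩
  have hsnn : 0 ≤ s := Real.sin_nonneg_of_nonneg_of_le_pi hθ0 (by linarith [Real.pi_pos])
  have hcs : s ^ 2 + c ^ 2 = 1 := Real.sin_sq_add_cos_sq _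
  -- the squared norm
  set Fx := a + r * c with hFx
  set Gx := b + r * s with hGx
  have hQpos : 0 < Fx ^ 2 + Gx ^ 2 := by
    have : Fx ≠ 0 ∨ Gx ≠ 0 := by
      by_contra h
      push_neg at h
      exact hα (by simp [Prod.ext_iff, h.1, h.2])
    rcases this with h | h <;> positivity
  set ρ := Real.sqrt (Fx ^ 2 + Gx ^ 2) with hρdef
  have hρpos : 0 < ρ := Real.sqrt_pos.mpr hQpos
  have hρsq : ρ ^ 2 = Fx ^ 2 + Gx ^ 2 := Real.sq_sqrt hQpos.le
  set v := b * c - a * s with hv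
  have hvle : v ≤ 0 := by simp [hv]; linarith
  set u := Fx * c + Gx * s with hu
  have hunn : 0 ≤ u := by positivity
  have hru : r * u ≤ ρ ^ 2 := by
    rw [hρsq]
    have : Fx ^ 2 + Gx ^ 2 - r * u = a ^ 2 + b ^ 2 + r * (a * c + b * s) := by
      simp only [hFx, hGx, hu]; nlinarith [hcs]
    nlinarith [mul_nonneg (mul_nonneg hr.le ha) hcnn, mul_nonneg (mul_nonneg hr.le hb) hsnn]
  -- derivatives of the coordinate functions
  have hθd : HasDerivAt (fun t : ℝ => t / r) (1 / r) x := (hasDerivAt_id x).div_const r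
  have hcd : HasDerivAt (fun t : ℝ => Real.cos (t / r)) (-s / r) x := by
    have := hθd.cos
    convert this using 1
    field_simp
    rfl
  have hsd : HasDerivAt (fun t : ℝ => Real.sin (t / r)) (c / r) x := by
    have := hθd.sin
    convert this using 1
    field_simp
    rfl
  have hFd : HasDerivAt (fun t : ℝ => a + r * Real.cos (t / r)) (-s) x := by
    have := (hcd.const_mul r).const_add a
    convert this using 1
    · rfl
    · rfl
    field_simp
  have hGd : HasDerivAt (fun t : ℝ => b + r * Real.sin (t / r)) c x := by
    have := (hsd.const_mul r).const_add b
    convert this using 1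
    · rfl
    · rfl
    field_simp
  -- derivative of the squared norm and the norm
  have hQd : HasDerivAt
      (fun t : ℝ => (a + r * Real.cos (t / r)) ^ 2 + (b + r * Real.sin (t / r)) ^ 2)
      (2 * v) x := by
    have := (hFd.pow 2).add (hGd.pow 2)
    convert this using 1
    · rfl
    · rfl
    · rfl
    simp only [hFx, hGx, hv, ← hc, ← hs]
    push_cast
    ring
  have hρd : HasDerivAt
      (fun t : ℝ => Real.sqrt ((a + r * Real.cos (t / r)) ^ 2 + (b + r * Real.sin (t / r)) ^ 2))
      (v / ρ) x := by
    have := hQd.sqrt hQpos.ne'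
    convert this using 1
    rw [← hρdef]
    field_simp
  -- derivative of u(t)
  have hud : HasDerivAt
      (fun t : ℝ => (a + r * Real.cos (t / r)) * Real.cos (t / r)
        + (b + r * Real.sin (t / r)) * Real.sin (t / r))
      (v / r) x := by
    have := (hFd.mul hcd).add (hGd.mul hsd)
    convert this using 1
    · rfl
    · rfl
    · rfl
    simp only [hFx, hGx, hv, ← hc, ← hs]
    field_simp
    ring
  -- derivative of g' ∘ ρ
  have hdg2 : ContDiff ℝ 2 (deriv g) := by
    have h3 : ContDiff ℝ (2 + 1) g := by exact_mod_cast hg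
    exact (contDiff_succ_iff_deriv.mp h3).2.2
  have hdgdiff : Differentiable ℝ (deriv g) := hdg2.differentiable (by norm_num)
  set g2 := deriv (deriv g) ρ with hg2
  have hgρd : HasDerivAt
      (fun t : ℝ => deriv g (Real.sqrt ((a + r * Real.cos (t / r)) ^ 2
        + (b + r * Real.sin (t / r)) ^ 2)))
      (g2 * (v / ρ)) x := by
    exact (hdgdiff ρ).hasDerivAt.comp x hρd
  -- derivative of u/ρ
  have hdiv : HasDerivAt
      (fun t : ℝ => ((a + r * Real.cos (t / r)) * Real.cos (t / r)
          + (b + r * Real.sin (t / r)) * Real.sin (t / r))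
        / Real.sqrt ((a + r * Real.cos (t / r)) ^ 2 + (b + r * Real.sin (t / r)) ^ 2))
      ((v / r * ρ - u * (v / ρ)) / ρ ^ 2) x := hud.div hρd hρpos.ne'
  -- derivative of H₁
  have hHd : HasDerivAt H₁
      (g2 * (v / ρ) * (u / ρ) + deriv g ρ * ((v / r * ρ - u * (v / ρ)) / ρ ^ 2)) x := by
    rw [hH₁]
    exact hgρd.mul hdiv
  rw [hHd.deriv]
  -- now the sign analysis
  have hg1 : 0 ≤ deriv g ρ := hg' ρ
  have hg2nn : 0 ≤ g2 := by
    have hmono : Monotone (deriv g) :=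
      monotoneOn_univ.mp (hgconv.monotoneOn_deriv
        (fun y _ => (hg.differentiable (by norm_num)) y))
    exact monotone_deriv_nonneg hmono (hdgdiff ρ)
  have hterm1 : g2 * (v / ρ) * (u / ρ) ≤ 0 := by
    apply mul_nonpos_of_nonpos_of_nonneg
    · exact mul_nonpos_of_nonneg_of_nonpos hg2nn (div_nonpos_of_nonpos_of_nonneg hvle hρpos.le)
    · exact div_nonneg hunn hρpos.le
  have hterm2 : deriv g ρ * ((v / r * ρ - u * (v / ρ)) / ρ ^ 2) ≤ 0 := by
    apply mul_nonpos_of_nonneg_of_nonpos hg1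
    apply div_nonpos_of_nonpos_of_nonneg _ (sq_nonneg ρ)
    have key : v / r * ρ - u * (v / ρ) = v * (ρ ^ 2 - r * u) / (r * ρ) := by
      field_simp
    rw [key]
    apply div_nonpos_of_nonpos_of_nonneg _ (by positivity)
    exact mul_nonpos_of_nonpos_of_nonneg hvle (by linarith)
  linarith
end

section
/- Let α(x) = (a + r cos(x/r), b + r sin(x/r)) with r > 0, a, b ≥ 0, let g : ℝ → ℝ be C³, convex, with g' ≥ 0, and define H₁(x) = g'(|α(x)|)·(N(x)·n(x)) as above. If x ∈ [0, πr/2], a sin(x/r) > b cos(x/r), and g'(|α(x)|) > 0, then H₁'(x) < 0. -/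
open Set Real Filter

lemma monotone_hasDerivAt_nonneg {f : ℝ → ℝ} {y f' : ℝ} (hm : Monotone f)
    (hf : HasDerivAt f f' y) : 0 ≤ f' := by
  have h := hasDerivAt_iff_tendsto_slope.mp hf
  refine ge_of_tendsto h ?_
  filter_upwards [self_mem_nhdsWithin] with z hz
  have hzy : z ≠ y := hz
  have hs : slope f y z = (f z - f y) / (z - y) := by simp [slope, div_eq_inv_mul]
  rw [hs]
  rcases hzy.lt_or_gt with h1 | h1
  · exact div_nonneg_iff.mpr (Or.inr ⟨by linarith [hm h1.le], by linarith⟩)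
  · exact div_nonneg (by linarith [hm h1.le]) (by linarith)

/-- `H₁' ≤ 0` along the circle `α(x) = (a + r cos(x/r), b + r sin(x/r))` when (strict version)
    `a sin(x/r) ≥ b cos(x/r)`, for a convex nondecreasing radial log-density `g`. -/
theorem H1_deriv_neg
    (a b r : ℝ) (hr : 0 < r) (ha : 0 ≤ a) (hb : 0 ≤ b)
    (g : ℝ → ℝ) (hg : ContDiff ℝ 3 g) (hgconv : ConvexOn ℝ univ g)
    (hg' : ∀ t, 0 ≤ deriv g t)
    (H₁ : ℝ → ℝ)
    (hH₁ : H₁ = fun t =>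
      deriv g (Real.sqrt ((a + r * Real.cos (t / r)) ^ 2 + (b + r * Real.sin (t / r)) ^ 2))
        * (((a + r * Real.cos (t / r)) * Real.cos (t / r)
            + (b + r * Real.sin (t / r)) * Real.sin (t / r))
          / Real.sqrt ((a + r * Real.cos (t / r)) ^ 2 + (b + r * Real.sin (t / r)) ^ 2)))
    (x : ℝ) (hx : x ∈ Icc 0 (π * r / 2))
    (hα : (a + r * Real.cos (x / r), b + r * Real.sin (x / r)) ≠ ((0 : ℝ), (0 : ℝ)))
    (hab : b * Real.cos (x / r) < a * Real.sin (x / r))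
    (hgx : 0 < deriv g
      (Real.sqrt ((a + r * Real.cos (x / r)) ^ 2 + (b + r * Real.sin (x / r)) ^ 2))) :
    deriv H₁ x < 0 := by
  obtain ⟨hx0, hx1⟩ := hx
  have hrne : r ≠ 0 := hr.ne'
  have hθ0 : 0 ≤ x / r := div_nonneg hx0 hr.le
  have hθ1 : x / r ≤ π / 2 := by rw [div_le_iff₀ hr]; linarith
  set c := Real.cos (x / r) with hc
  set s := Real.sin (x / r) with hs
  have hc0 : 0 ≤ c := Real.cos_nonneg_of_mem_Icc ⟨by linarith [Real.pi_pos], hθ1⟩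
  have hs0 : 0 ≤ s := Real.sin_nonneg_of_nonneg_of_le_pi hθ0 (by linarith [Real.pi_pos])
  -- positivity facts
  have hap : 0 < a := by nlinarith [mul_nonneg hb hc0]
  have hA0 : 0 < a + r * c := by nlinarith
  have hB0 : 0 ≤ b + r * s := by positivity
  have hP : 0 < (a + r * c) ^ 2 + (b + r * s) ^ 2 := by positivity
  set p := Real.sqrt ((a + r * c) ^ 2 + (b + r * s) ^ 2) with hpdef
  have hppos : 0 < p := Real.sqrt_pos.mpr hP
  have hp2 : p ^ 2 = (a + r * c) ^ 2 + (b + r * s) ^ 2 := Real.sq_sqrt hP.le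
  set D := b * c - a * s with hDdef
  have hD : D < 0 := by simp [hDdef]; linarith
  -- derivatives of basic pieces
  have hdiv : HasDerivAt (fun t : ℝ => t / r) (1 / r) x := (hasDerivAt_id x).div_const r
  have hcos : HasDerivAt (fun t : ℝ => Real.cos (t / r)) (-(s / r)) x := by
    have h := (Real.hasDerivAt_cos (x / r)).comp x hdiv
    refine h.congr_deriv ?_
    rw [hs]; ring
  have hsin : HasDerivAt (fun t : ℝ => Real.sin (t / r)) (c / r) x := by
    have h := (Real.hasDerivAt_sin (x / r)).comp x hdiv
    refine h.congr_deriv ?_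
    rw [hc]; ring
  have hA' : HasDerivAt (fun t : ℝ => a + r * Real.cos (t / r)) (-s) x := by
    have h := (hcos.const_mul r).const_add a
    refine h.congr_deriv ?_; field_simp
  have hB' : HasDerivAt (fun t : ℝ => b + r * Real.sin (t / r)) c x := by
    have h := (hsin.const_mul r).const_add b
    refine h.congr_deriv ?_; field_simp
  have hPd : HasDerivAt
      (fun t : ℝ => (a + r * Real.cos (t / r)) ^ 2 + (b + r * Real.sin (t / r)) ^ 2)
      (2 * D) x := by
    have h := (hA'.pow 2).add (hB'.pow 2)
    refine h.congr_deriv ?_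
    simp only [← hc, ← hs, hDdef]
    push_cast
    ring
  have hPne : (a + r * Real.cos (x / r)) ^ 2 + (b + r * Real.sin (x / r)) ^ 2 ≠ 0 := by
    rw [← hc, ← hs]; exact hP.ne'
  have hsq : HasDerivAt
      (fun t : ℝ => Real.sqrt ((a + r * Real.cos (t / r)) ^ 2 + (b + r * Real.sin (t / r)) ^ 2))
      (D / p) x := by
    have h := (Real.hasDerivAt_sqrt hPne).comp x hPd
    refine h.congr_deriv ?_
    rw [← hc, ← hs, ← hpdef]
    field_simp
  -- second derivative of g
  have hg2 : ContDiff ℝ 2 (deriv g) := by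
    have h3 : ContDiff ℝ ((2 : ℕ) + 1) g := by exact_mod_cast hg
    exact (contDiff_succ_iff_deriv.mp h3).2.2
  have hgd : HasDerivAt (deriv g) (deriv (deriv g) p) p :=
    ((hg2.differentiable (by norm_num)) p).hasDerivAt
  have hmono : Monotone (deriv g) := by
    have h := hgconv.monotoneOn_deriv (fun y _ => (hg.differentiable (by norm_num)) y)
    intro u v huv
    exact h (mem_univ u) (mem_univ v) huv
  have hG2 : 0 ≤ deriv (deriv g) p := monotone_hasDerivAt_nonneg hmono hgd
  -- numerator
  have hNd : HasDerivAt
      (fun t : ℝ => (a + r * Real.cos (t / r)) * Real.cos (t / r)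
        + (b + r * Real.sin (t / r)) * Real.sin (t / r))
      (D / r) x := by
    have h := (hA'.mul hcos).add (hB'.mul hsin)
    refine h.congr_deriv ?_
    rw [← hc, ← hs, hDdef]
    field_simp
    ring
  -- assemble
  have hcomp : HasDerivAt
      (fun t : ℝ => deriv g
        (Real.sqrt ((a + r * Real.cos (t / r)) ^ 2 + (b + r * Real.sin (t / r)) ^ 2)))
      (deriv (deriv g) p * (D / p)) x := by
    have h := hgd.comp x hsq
    exact h
  set Nm := (a + r * c) * c + (b + r * s) * s with hNmdef
  have hfull : HasDerivAt H₁
      (deriv (deriv g) p * (D / p) * (Nm / p)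
        + deriv g p * ((D / r * p - Nm * (D / p)) / p ^ 2)) x := by
    rw [hH₁]
    have h := hcomp.mul (hNd.div hsq (by rw [← hc, ← hs, ← hpdef]; exact hppos.ne'))
    refine h.congr_deriv ?_; rw [← hc, ← hs, ← hpdef]; rfl
  rw [hfull.deriv]
  -- final inequality
  have hG1 : 0 < deriv g p := hgx
  have hNm0 : 0 ≤ Nm := add_nonneg (mul_nonneg hA0.le hc0) (mul_nonneg hB0 hs0)
  have hT1 : deriv (deriv g) p * (D / p) * (Nm / p) ≤ 0 := by
    have h1 : deriv (deriv g) p * (D / p) ≤ 0 :=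
      mul_nonpos_iff.mpr (Or.inl ⟨hG2, div_nonpos_of_nonpos_of_nonneg hD.le hppos.le⟩)
    exact mul_nonpos_iff.mpr (Or.inr ⟨h1, div_nonneg hNm0 hppos.le⟩)
  have hq : 0 < p ^ 2 - r * Nm := by
    rw [hp2, hNmdef]
    nlinarith [mul_pos hap hA0, mul_nonneg hb hB0]
  have hnum : D / r * p - Nm * (D / p) < 0 := by
    have heq : D / r * p - Nm * (D / p) = D * (p ^ 2 - r * Nm) / (r * p) := by
      field_simp
    rw [heq]
    exact div_neg_of_neg_of_pos (mul_neg_of_neg_of_pos hD hq) (mul_pos hr hppos)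
  have hT2 : deriv g p * ((D / r * p - Nm * (D / p)) / p ^ 2) < 0 :=
    mul_neg_of_pos_of_neg hG1 (div_neg_of_neg_of_pos hnum (by positivity))
  linarith
end

section
/- Let γ : (−β, β) → ℝ² be a C¹ unit-speed curve with γ₂(x) > 0 on (0, β), |γ| nonincreasing on [0, β), and suppose at some x ∈ (0, β) the tangent γ'(x) lies in the second quadrant (γ'₁(x) ≤ 0, γ'₂(x) ≥ 0) and γ'(x) ≠ (0, ±1). Let (a, 0) be the center of the canonical circle at x, i.e., the intersection of the normal line to γ at γ(x) with the e₁-axis. Then a ≥ 0. -/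
open Set Real

/-- The center of the canonical circle at a point of the curve whose tangent lies in the
    second quadrant has nonnegative `e₁`-coordinate. -/
theorem canonical_center_nonneg
    (β : ℝ) (hβ : 0 < β)
    (γ : ℝ → ℝ × ℝ) (γ' : ℝ → ℝ × ℝ)
    (hγ : ∀ t ∈ Ioo (-β) β, HasDerivAt γ (γ' t) t)
    (hunit : ∀ t ∈ Ioo (-β) β, Real.sqrt ((γ' t).1 ^ 2 + (γ' t).2 ^ 2) = 1)
    (hγ2 : ∀ t ∈ Ioo 0 β, 0 < (γ t).2)
    (hmono : AntitoneOn (fun t => Real.sqrt ((γ t).1 ^ 2 + (γ t).2 ^ 2)) (Ico 0 β))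
    (x : ℝ) (hx : x ∈ Ioo 0 β)
    (hq1 : (γ' x).1 ≤ 0) (hq2 : 0 ≤ (γ' x).2)
    (hnv1 : γ' x ≠ ((0 : ℝ), (1 : ℝ)))  (hnv2 : γ' x ≠ ((0 : ℝ), (-1 : ℝ)))
    (a : ℝ)
    (hperp : (a - (γ x).1) * (γ' x).1 + (0 - (γ x).2) * (γ' x).2 = 0) :
    0 ≤ a := by
  have hxI : x ∈ Ioo (-β) β := ⟨by linarith [hx.1], hx.2⟩
  -- unit speed at x
  have hu : (γ' x).1 ^ 2 + (γ' x).2 ^ 2 = 1 := by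
    have h := hunit x hxI
    have hnn : 0 ≤ (γ' x).1 ^ 2 + (γ' x).2 ^ 2 := by positivity
    nlinarith [Real.sq_sqrt hnn, h]
  -- γ'₁ x < 0
  have h1neg : (γ' x).1 < 0 := by
    rcases lt_or_eq_of_le hq1 with h | h
    · exact h
    · exfalso
      have h2 : (γ' x).2 ^ 2 = 1 := by nlinarith
      rcases mul_self_eq_one_iff.1 (by nlinarith : (γ' x).2 * (γ' x).2 = 1) with h' | h'
      · exact hnv1 (Prod.ext h h')
      · exact hnv2 (Prod.ext h h')
  -- squared norm function
  set f : ℝ → ℝ := fun t => (γ t).1 ^ 2 + (γ t).2 ^ 2 with hf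
  have hfanti : AntitoneOn f (Ico 0 β) := by
    intro s hs t ht hst
    have h := hmono hs ht hst
    have hns : 0 ≤ f s := by positivity
    have hnt : 0 ≤ f t := by positivity
    have := Real.sqrt_le_sqrt_iff (x := f t) (y := f s) hns
    nlinarith [Real.sq_sqrt hns, Real.sq_sqrt hnt, Real.sqrt_nonneg (f s),
      Real.sqrt_nonneg (f t), h]
  -- derivative of f at x
  have hderiv : HasDerivAt f (2 * ((γ x).1 * (γ' x).1 + (γ x).2 * (γ' x).2)) x := by
    have h := hγ x hxI
    have h1 : HasDerivAt (fun t => (γ t).1) (γ' x).1 x := h.fst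
    have h2 : HasDerivAt (fun t => (γ t).2) (γ' x).2 x := h.snd
    have := (h1.fun_pow 2).add (h2.fun_pow 2)
    refine this.congr_deriv ?_
    ring
  -- derivative nonpositive by antitonicity
  have hd : 2 * ((γ x).1 * (γ' x).1 + (γ x).2 * (γ' x).2) ≤ 0 := by
    have hdw : HasDerivWithinAt f (2 * ((γ x).1 * (γ' x).1 + (γ x).2 * (γ' x).2))
        (Ioi x) x := hderiv.hasDerivWithinAt
    have hslope := (hasDerivWithinAt_iff_tendsto_slope' (notMem_Ioi.2 le_rfl)).1 hdw
    refine le_of_tendsto hslope ?_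
    have hmem : Ioo x β ∈ nhdsWithin x (Ioi x) :=
      Ioo_mem_nhdsGT_of_mem ⟨le_rfl, hx.2⟩
    filter_upwards [hmem] with t ht
    have hts : x < t := ht.1
    have hfle : f t ≤ f x :=
      hfanti ⟨hx.1.le, hx.2⟩ ⟨by linarith [hx.1], ht.2⟩ hts.le
    have : slope f x t = (f t - f x) / (t - x) := slope_def_field f x t
    rw [this]
    apply div_nonpos_of_nonpos_of_nonneg <;> linarith
  -- conclude
  have key : a * (γ' x).1 = (γ x).1 * (γ' x).1 + (γ x).2 * (γ' x).2 := by linarith [hperp]; 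
  nlinarith [mul_nonneg (neg_nonneg.2 hd) (le_of_lt (neg_pos.2 h1neg))]
end
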